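/- Let A⁺, A⁻ ⊆ ℝⁿ be disjoint finite sets with A⁺ ≠ ∅, set A = A⁺ ∪ A⁻, and let v : A → ℝ satisfy v_α > 0 for all α ∈ A⁺. Then v ∈ D_{(A⁺,A⁻)} if and only if the following finite system of linear inequalities in the unknowns (τ^{(β)})_{β∈A⁻} ⊆ ℝⁿ is feasible: for every β ∈ A⁻ and every α ∈ A⁺, ln(|v_β|/v_α) ≤ ⟨α − β, τ^{(β)}⟩. Moreover, every such v belongs to the dual cone of C_{(A⁺,A⁻)}. -/

import Mathlib

open Finset

/-- The exponential sum with support `A` and coefficient vector `v`. -/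
noncomputable def expSum {n : ℕ} (A : Finset (Fin n → ℝ)) (v : (Fin n → ℝ) → ℝ)
    (x : Fin n → ℝ) : ℝ :=
  ∑ γ ∈ A, v γ * Real.exp (∑ i, x i * γ i)

/-- The signed SONC (= SAGE) cone `C_{(A⁺,A⁻)}`. -/
def InSAGE {n : ℕ} (Ap An : Finset (Fin n → ℝ)) (c : (Fin n → ℝ) → ℝ) : Prop :=
  (∀ α ∈ Ap, 0 ≤ c α) ∧ (∀ β ∈ An, c β ≤ 0) ∧
  ∃ (m : ℕ) (d : Fin m → (Fin n → ℝ) → ℝ),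
    (∀ γ ∈ Ap ∪ An, c γ = ∑ i, d i γ) ∧
    (∀ i, ∀ γ₁ ∈ Ap ∪ An, ∀ γ₂ ∈ Ap ∪ An, d i γ₁ < 0 → d i γ₂ < 0 → γ₁ = γ₂) ∧
    (∀ i, ∀ x : Fin n → ℝ, 0 ≤ expSum (Ap ∪ An) (d i) x)

/-- The dual cone of a set `K` of coefficient vectors on the support `A`. -/
def dualCone {n : ℕ} (A : Finset (Fin n → ℝ)) (K : Set ((Fin n → ℝ) → ℝ)) :
    Set ((Fin n → ℝ) → ℝ) :=
  {v | ∀ c ∈ K, 0 ≤ ∑ γ ∈ A, v γ * c γ}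

/-- `Λ(A⁺, β)`: barycentric coordinates of `β` with respect to `A⁺`. -/
def IsBary {n : ℕ} (Ap : Finset (Fin n → ℝ)) (β : Fin n → ℝ) (lam : (Fin n → ℝ) → ℝ) : Prop :=
  (∀ α ∈ Ap, 0 ≤ lam α) ∧ (∑ α ∈ Ap, lam α = 1) ∧ (∑ α ∈ Ap, lam α • α = β)

/-- The set `D_{(A⁺,A⁻)}` cut out by the weighted geometric-mean inequalities. -/
def InDual {n : ℕ} (Ap An : Finset (Fin n → ℝ)) (v : (Fin n → ℝ) → ℝ) : Prop :=
  (∀ α ∈ Ap, 0 ≤ v α) ∧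
  ∀ β ∈ An, ∀ lam : (Fin n → ℝ) → ℝ, IsBary Ap β lam → |v β| ≤ ∏ α ∈ Ap, v α ^ lam α

noncomputable section SAGEAux

/-- Dot product on `Fin N → ℝ`. -/
private def dot {N : ℕ} (x y : Fin N → ℝ) : ℝ := ∑ i, x i * y i

private lemma dot_sub_left {N : ℕ} (x z y : Fin N → ℝ) : dot (x - z) y = dot x y - dot z y := by
  simp [dot, sub_mul, Finset.sum_sub_distrib]

private lemma dot_smul_left {N : ℕ} (s : ℝ) (x y : Fin N → ℝ) : dot (s • x) y = s * dot x y := by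
  simp only [dot, Pi.smul_apply, smul_eq_mul, Finset.mul_sum]
  exact Finset.sum_congr rfl fun i _ => by ring

private lemma dot_sub_right {N : ℕ} (y x z : Fin N → ℝ) : dot y (x - z) = dot y x - dot y z := by
  simp [dot, mul_sub, Finset.sum_sub_distrib]

private lemma dot_smul_right {N : ℕ} (s : ℝ) (y x : Fin N → ℝ) : dot y (s • x) = s * dot y x := by
  simp only [dot, Pi.smul_apply, smul_eq_mul, Finset.mul_sum]
  exact Finset.sum_congr rfl fun i _ => by ring

private lemma dot_self_pos {N : ℕ} {w : Fin N → ℝ} (hw : w ≠ 0) : 0 < dot w w := by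
  have : ∃ i, w i ≠ 0 := by
    by_contra h
    push_neg at h
    exact hw (funext h)
  obtain ⟨i0, hi0⟩ := this
  refine Finset.sum_pos' (fun i _ => mul_self_nonneg _) ⟨i0, Finset.mem_univ _, ?_⟩
  exact mul_self_pos.mpr hi0

private lemma dot_neg_right {N : ℕ} (x y : Fin N → ℝ) : dot x (-y) = - dot x y := by
  simp [dot]

/-- Farkas' lemma, algebraic inductive form. -/
private lemma farkas {N : ℕ} (k : ℕ) (u : Fin k → Fin N → ℝ) (w : Fin N → ℝ) :
    (∃ c : Fin k → ℝ, (∀ i, 0 ≤ c i) ∧ w = ∑ i, c i • u i) ∨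
    (∃ y : Fin N → ℝ, (∀ i, 0 ≤ dot (u i) y) ∧ dot w y < 0) := by
  induction k generalizing w with
  | zero =>
    by_cases hw : w = 0
    · exact Or.inl ⟨fun _ => 0, fun i => le_refl _, by simp [hw]⟩
    · refine Or.inr ⟨-w, fun i => i.elim0, ?_⟩
      rw [dot_neg_right]
      simpa using dot_self_pos hw
  | succ k ih =>
    set v := u 0 with hv
    set T : Fin k → Fin N → ℝ := fun j => u j.succ with hT
    rcases ih T w with ⟨c, hc, hw⟩ | ⟨y, hTy, hwy⟩
    · refine Or.inl ⟨Fin.cons 0 c, ?_, ?_⟩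
      · intro i
        refine Fin.cases ?_ ?_ i
        · exact le_refl 0
        · exact hc
      · rw [Fin.sum_univ_succ]
        simp [hw, hT]
    · by_cases hvy : 0 ≤ dot v y
      · refine Or.inr ⟨y, ?_, hwy⟩
        intro i
        refine Fin.cases hvy hTy i
      · push_neg at hvy
        have hvy' : dot v y ≠ 0 := ne_of_lt hvy
        set proj : (Fin N → ℝ) → (Fin N → ℝ) := fun z => z - (dot z y / dot v y) • v with hproj
        rcases ih (fun j => proj (T j)) (proj w) with ⟨c, hc, hw⟩ | ⟨z, hTz, hwz⟩
        · set μ : ℝ := dot w y / dot v y - ∑ j, c j * (dot (T j) y / dot v y) with hμ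
          have hμ0 : 0 ≤ μ := by
            have h1 : μ = (dot w y - ∑ j, c j * dot (T j) y) / dot v y := by
              rw [hμ, sub_div, Finset.sum_div]
              congr 1
              exact Finset.sum_congr rfl fun j _ => (mul_div_assoc _ _ _).symm
            rw [h1]
            refine div_nonneg_iff.mpr (Or.inr ⟨?_, le_of_lt hvy⟩)
            have h2 : 0 ≤ ∑ j, c j * dot (T j) y :=
              Finset.sum_nonneg fun j _ => mul_nonneg (hc j) (hTy j)
            linarith
          refine Or.inl ⟨Fin.cons μ c, ?_, ?_⟩
          · intro i
            refine Fin.cases hμ0 hc i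
          · have h2 : w = (∑ j, c j • proj (T j)) + (dot w y / dot v y) • v := by
              rw [← hw, hproj]
              simp
            rw [Fin.sum_univ_succ]
            simp only [Fin.cons_zero, Fin.cons_succ]
            rw [h2]
            simp only [hproj, smul_sub, smul_smul, Finset.sum_sub_distrib, ← Finset.sum_smul]
            rw [hμ, sub_smul]
            abel
        · refine Or.inr ⟨z - (dot v z / dot v y) • y, ?_, ?_⟩
          · intro i
            refine Fin.cases ?_ ?_ i
            · rw [dot_sub_right, dot_smul_right]
              have : dot v z / dot v y * dot v y = dot v z := by field_simp
              rw [this]; simp; exact le_rfl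
            · intro j
              have h3 := hTz j
              rw [hproj, dot_sub_left, dot_smul_left] at h3
              rw [dot_sub_right, dot_smul_right]
              have h5 : dot (T j) y / dot v y * dot v z = dot v z / dot v y * dot (T j) y := by
                ring
              rw [h5] at h3
              exact h3
          · have h4 := hwz
            rw [hproj, dot_sub_left, dot_smul_left] at h4
            rw [dot_sub_right, dot_smul_right]
            have h5 : dot w y / dot v y * dot v z = dot v z / dot v y * dot w y := by ring
            rw [h5] at h4
            exact h4

private def pad {n : ℕ} (a : Fin n → ℝ) (r : ℝ) : Fin (n + 1) → ℝ := Fin.snoc a r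

private lemma dot_pad {n : ℕ} (a : Fin n → ℝ) (r : ℝ) (y : Fin (n + 1) → ℝ) :
    dot (pad a r) y = (∑ i : Fin n, a i * y i.castSucc) + r * y (Fin.last n) := by
  unfold dot pad
  rw [Fin.sum_univ_castSucc]
  simp

/-- The hard direction: `InDual`-type conditions at `β` give a feasible `τ` via Farkas. -/
private lemma exists_tau {n : ℕ} (Ap : Finset (Fin n → ℝ)) (hAp : Ap.Nonempty)
    (v : (Fin n → ℝ) → ℝ) (hv : ∀ α ∈ Ap, 0 < v α) (β : Fin n → ℝ) (b : ℝ) (hb0 : 0 < b)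
    (hD : ∀ lam : (Fin n → ℝ) → ℝ, IsBary Ap β lam → b ≤ ∏ α ∈ Ap, v α ^ lam α) :
    ∃ t : Fin n → ℝ, ∀ α ∈ Ap, b ≤ v α * Real.exp (∑ i, (α i - β i) * t i) := by
  classical
  set k := Fintype.card {x // x ∈ Ap} with hk
  set e : {x // x ∈ Ap} ≃ Fin k := Fintype.equivFin _ with he
  set A : Fin k → Fin n → ℝ := fun j => ((e.symm j : {x // x ∈ Ap}) : Fin n → ℝ) with hA
  set bb : Fin k → ℝ := fun j => Real.log b - Real.log (v (A j)) with hbb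
  set U : Fin (k + 1) → Fin (n + 1) → ℝ :=
    Fin.cons (pad 0 (-1)) (fun j => pad (A j - β) (bb j)) with hU
  rcases farkas (k + 1) U (pad 0 1) with ⟨c, hc, hw⟩ | ⟨y, hUy, hwy⟩
  · exfalso
    have hlast : (1 : ℝ) = c 0 * (-1) + ∑ j : Fin k, c j.succ * bb j := by
      have h := congrFun hw (Fin.last n)
      simp only [Finset.sum_apply, Pi.smul_apply, smul_eq_mul] at h
      rw [Fin.sum_univ_succ] at h
      simp only [hU, pad, Fin.cons_zero, Fin.cons_succ, Fin.snoc_last] at h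
      linarith
    have hcoord : ∀ i0 : Fin n, (0 : ℝ) = ∑ j : Fin k, c j.succ * (A j i0 - β i0) := by
      intro i0
      have h := congrFun hw (Fin.castSucc i0)
      simp only [Finset.sum_apply, Pi.smul_apply, smul_eq_mul] at h
      rw [Fin.sum_univ_succ] at h
      simp only [hU, pad, Fin.cons_zero, Fin.cons_succ, Fin.snoc_castSucc, Pi.zero_apply,
        Pi.sub_apply, mul_zero, zero_add] at h
      linarith
    set s : ℝ := ∑ j : Fin k, c j.succ with hs
    have hs0 : 0 ≤ s := Finset.sum_nonneg fun j _ => hc j.succ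
    have hsum_pos : (0 : ℝ) < ∑ j : Fin k, c j.succ * bb j := by
      have h0 := hc 0
      nlinarith [hlast]
    have hs_pos : 0 < s := by
      rcases lt_or_eq_of_le hs0 with h | h
      · exact h
      · exfalso
        have hz := (Finset.sum_eq_zero_iff_of_nonneg (fun j _ => hc j.succ)).mp h.symm
        have hzz : (∑ j : Fin k, c j.succ * bb j) = 0 :=
          Finset.sum_eq_zero fun j hj => by rw [hz j (Finset.mem_univ j), zero_mul]
        rw [hzz] at hsum_pos
        exact lt_irrefl 0 hsum_pos
    set lam : (Fin n → ℝ) → ℝ :=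
      fun x => if hx : x ∈ Ap then c (Fin.succ (e ⟨x, hx⟩)) / s else 0 with hlam
    have hconv : ∀ F : (Fin n → ℝ) → ℝ,
        ∑ α ∈ Ap, lam α * F α = (∑ j : Fin k, c j.succ * F (A j)) / s := by
      intro F
      rw [← Finset.sum_coe_sort Ap (fun α => lam α * F α)]
      rw [← Equiv.sum_comp e.symm (fun a : {x // x ∈ Ap} =>
        lam (a : Fin n → ℝ) * F (a : Fin n → ℝ))]
      rw [Finset.sum_div]
      refine Finset.sum_congr rfl fun j _ => ?_
      have hmem := (e.symm j).2
      simp only [hlam, dif_pos hmem]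
      rw [Subtype.coe_eta, Equiv.apply_symm_apply, div_mul_eq_mul_div]
    have hlam_sum : ∑ α ∈ Ap, lam α = 1 := by
      have h := hconv (fun _ => 1)
      simp only [mul_one] at h
      rw [h, div_self (ne_of_gt hs_pos)]
    have hbary : IsBary Ap β lam := by
      refine ⟨?_, hlam_sum, ?_⟩
      · intro α hα
        rw [hlam]
        simp only [dif_pos hα]
        exact div_nonneg (hc _) hs0
      · funext i0
        rw [Finset.sum_apply]
        simp only [Pi.smul_apply, smul_eq_mul]
        have h1 := hconv (fun α => α i0)
        have h2 := hcoord i0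
        have h3 : ∑ j : Fin k, c j.succ * A j i0 = s * β i0 := by
          have h4 : ∑ j : Fin k, c j.succ * (A j i0 - β i0)
              = (∑ j : Fin k, c j.succ * A j i0) - s * β i0 := by
            rw [hs, Finset.sum_mul, ← Finset.sum_sub_distrib]
            exact Finset.sum_congr rfl fun j _ => by ring
          rw [h4] at h2
          linarith
        rw [h1, h3, mul_comm s (β i0), mul_div_assoc, div_self (ne_of_gt hs_pos), mul_one]
    have hge := hD lam hbary
    have hlog : Real.log b ≤ ∑ α ∈ Ap, lam α * Real.log (v α) := by
      have h1 := Real.log_le_log hb0 hge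
      rw [Real.log_prod (fun α hα => ne_of_gt (Real.rpow_pos_of_pos (hv α hα) _))] at h1
      calc Real.log b ≤ ∑ α ∈ Ap, Real.log (v α ^ lam α) := h1
        _ = ∑ α ∈ Ap, lam α * Real.log (v α) :=
          Finset.sum_congr rfl fun α hα => Real.log_rpow (hv α hα) _
    have hexpand : ∑ α ∈ Ap, lam α * (Real.log b - Real.log (v α))
        = Real.log b - ∑ α ∈ Ap, lam α * Real.log (v α) := by
      rw [Finset.sum_congr rfl (fun α _ => mul_sub (lam α) _ _), Finset.sum_sub_distrib,
        ← Finset.sum_mul, hlam_sum, one_mul]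
    have hgt0 : 0 < ∑ α ∈ Ap, lam α * (Real.log b - Real.log (v α)) := by
      rw [hconv (fun α => Real.log b - Real.log (v α))]
      exact div_pos hsum_pos hs_pos
    rw [hexpand] at hgt0
    linarith
  · set s : ℝ := y (Fin.last n) with hsdef
    have hs_neg : s < 0 := by
      have h := hwy
      rw [dot_pad] at h
      simpa using h
    refine ⟨fun i => y i.castSucc / (-s), ?_⟩
    intro α hα
    have hj := hUy (Fin.succ (e ⟨α, hα⟩))
    have hAj : A (e ⟨α, hα⟩) = α := by
      rw [hA]
      simp
    rw [hU] at hj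
    rw [Fin.cons_succ, dot_pad, hAj] at hj
    have hS : Real.log b - Real.log (v α) ≤ ∑ i, (α i - β i) * (y i.castSucc / (-s)) := by
      have hbbj : bb (e ⟨α, hα⟩) = Real.log b - Real.log (v α) := by
        rw [hbb]
        simp only [hAj]
      rw [hbbj] at hj
      have hns : 0 < -s := by linarith
      have hsum : ∑ i, (α i - β i) * (y i.castSucc / (-s))
          = (∑ i : Fin n, (α - β) i * y i.castSucc) / (-s) := by
        rw [Finset.sum_div]
        exact Finset.sum_congr rfl fun i _ => by
          simp only [Pi.sub_apply]
          ring
      rw [hsum, le_div_iff₀ hns]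
      nlinarith [hj]
    have h2 : Real.log b ≤ Real.log (v α) + ∑ i, (α i - β i) * (y i.castSucc / (-s)) := by
      linarith
    calc b = Real.exp (Real.log b) := (Real.exp_log hb0).symm
      _ ≤ Real.exp (Real.log (v α) + ∑ i, (α i - β i) * (y i.castSucc / (-s))) :=
        Real.exp_le_exp.mpr h2
      _ = v α * Real.exp (∑ i, (α i - β i) * (y i.castSucc / (-s))) := by
        rw [Real.exp_add, Real.exp_log (hv α hα)]

/-- Feasibility of the linear system implies membership in `D`. -/
private lemma tau_to_InDual {n : ℕ} (Ap An : Finset (Fin n → ℝ))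
    (v : (Fin n → ℝ) → ℝ) (hv : ∀ α ∈ Ap, 0 < v α)
    (τ : (Fin n → ℝ) → (Fin n → ℝ))
    (hτ : ∀ β ∈ An, ∀ α ∈ Ap, |v β| ≤ v α * Real.exp (∑ i, (α i - β i) * τ β i)) :
    InDual Ap An v := by
  refine ⟨fun α hα => (hv α hα).le, ?_⟩
  rintro β hβ lam ⟨hlam0, hlam1, hlamβ⟩
  by_cases hvb : v β = 0
  · rw [hvb, abs_zero]
    exact Finset.prod_nonneg fun α hα => Real.rpow_nonneg (hv α hα).le _
  · have habs : 0 < |v β| := abs_pos.mpr hvb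
    have hprod : ∏ α ∈ Ap, v α ^ lam α = Real.exp (∑ α ∈ Ap, Real.log (v α) * lam α) := by
      rw [Real.exp_sum]
      exact Finset.prod_congr rfl fun α hα => Real.rpow_def_of_pos (hv α hα) _
    rw [hprod]
    refine (Real.log_le_iff_le_exp habs).mp ?_
    have hαineq : ∀ α ∈ Ap, Real.log |v β| ≤ Real.log (v α) + ∑ i, (α i - β i) * τ β i := by
      intro α hα
      have h2 := Real.log_le_log habs (hτ β hβ α hα)
      rwa [Real.log_mul (ne_of_gt (hv α hα)) (Real.exp_ne_zero _), Real.log_exp] at h2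
    have h1 : ∀ i : Fin n, ∑ α ∈ Ap, lam α * α i = β i := by
      intro i
      have h := congrFun hlamβ i
      rw [Finset.sum_apply] at h
      simpa using h
    have hzero : ∑ α ∈ Ap, lam α * (∑ i, (α i - β i) * τ β i) = 0 := by
      calc ∑ α ∈ Ap, lam α * (∑ i, (α i - β i) * τ β i)
          = ∑ α ∈ Ap, ∑ i, lam α * ((α i - β i) * τ β i) :=
            Finset.sum_congr rfl fun α _ => Finset.mul_sum _ _ _
        _ = ∑ i, ∑ α ∈ Ap, lam α * ((α i - β i) * τ β i) := Finset.sum_comm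
        _ = 0 := Finset.sum_eq_zero fun i _ => by
            have h2 : ∑ α ∈ Ap, lam α * ((α i - β i) * τ β i)
                = (∑ α ∈ Ap, lam α * α i) * τ β i
                  - (∑ α ∈ Ap, lam α) * (β i * τ β i) := by
              rw [Finset.sum_mul, Finset.sum_mul, ← Finset.sum_sub_distrib]
              exact Finset.sum_congr rfl fun α _ => by ring
            rw [h2, h1 i, hlam1, one_mul]
            ring
    calc Real.log |v β| = ∑ α ∈ Ap, lam α * Real.log |v β| := by
          rw [← Finset.sum_mul, hlam1, one_mul]
      _ ≤ ∑ α ∈ Ap, lam α * (Real.log (v α) + ∑ i, (α i - β i) * τ β i) :=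
          Finset.sum_le_sum fun α hα =>
            mul_le_mul_of_nonneg_left (hαineq α hα) (hlam0 α hα)
      _ = ∑ α ∈ Ap, lam α * Real.log (v α)
          + ∑ α ∈ Ap, lam α * (∑ i, (α i - β i) * τ β i) := by
          rw [← Finset.sum_add_distrib]
          exact Finset.sum_congr rfl fun α _ => mul_add _ _ _
      _ = ∑ α ∈ Ap, Real.log (v α) * lam α := by
          rw [hzero, add_zero]
          exact Finset.sum_congr rfl fun α _ => mul_comm _ _

/-- Feasibility of the linear system implies membership in the dual cone. -/
private lemma tau_to_dualCone {n : ℕ} (Ap An : Finset (Fin n → ℝ))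
    (hdisj : Disjoint Ap An) (hAp : Ap.Nonempty)
    (v : (Fin n → ℝ) → ℝ) (hv : ∀ α ∈ Ap, 0 < v α)
    (τ : (Fin n → ℝ) → (Fin n → ℝ))
    (hτ : ∀ β ∈ An, ∀ α ∈ Ap, |v β| ≤ v α * Real.exp (∑ i, (α i - β i) * τ β i)) :
    v ∈ dualCone (Ap ∪ An) {c | InSAGE Ap An c} := by
  intro c hc
  obtain ⟨hcp, hcn, m, d, hsum, huniq, hnn⟩ := hc
  by_cases hAn : An.Nonempty
  case neg =>
    have hAn' : An = ∅ := Finset.not_nonempty_iff_eq_empty.mp hAn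
    rw [hAn', Finset.union_empty]
    exact Finset.sum_nonneg fun α hα => mul_nonneg (hv α hα).le (hcp α hα)
  case pos =>
  set t : (Fin n → ℝ) → ℝ :=
    fun β => Ap.inf' hAp (fun α => v α * Real.exp (∑ i, τ β i * α i)) with ht
  set mB : (Fin n → ℝ) → (Fin n → ℝ) → ℝ :=
    fun β γ => t β * Real.exp (∑ i, -τ β i * γ i) with hmB
  have ht_pos : ∀ β, 0 < t β := by
    intro β
    obtain ⟨α0, hα0, heq⟩ :=
      Finset.exists_mem_eq_inf' hAp (fun α => v α * Real.exp (∑ i, τ β i * α i))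
    simp only [ht]
    rw [heq]
    exact mul_pos (hv _ hα0) (Real.exp_pos _)
  have hm_pos : ∀ β γ, 0 < mB β γ := fun β γ => mul_pos (ht_pos β) (Real.exp_pos _)
  set u : (Fin n → ℝ) → ℝ := fun γ => An.sup' hAn (fun β => mB β γ) with hu
  have hu_nonneg : ∀ γ, 0 ≤ u γ := by
    intro γ
    obtain ⟨β0, hβ0⟩ := hAn
    simp only [hu]
    exact le_trans (hm_pos β0 γ).le (Finset.le_sup' (fun β => mB β γ) hβ0)
  have hmle : ∀ β, ∀ α ∈ Ap, mB β α ≤ v α := by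
    intro β α hα
    have h1 : t β ≤ v α * Real.exp (∑ i, τ β i * α i) :=
      Finset.inf'_le (fun α => v α * Real.exp (∑ i, τ β i * α i)) hα
    calc mB β α = t β * Real.exp (∑ i, -τ β i * α i) := rfl
      _ ≤ (v α * Real.exp (∑ i, τ β i * α i)) * Real.exp (∑ i, -τ β i * α i) :=
          mul_le_mul_of_nonneg_right h1 (Real.exp_pos _).le
      _ = v α := by
          rw [mul_assoc, ← Real.exp_add]
          have h3 : (∑ i, τ β i * α i) + ∑ i, -τ β i * α i = 0 := by
            rw [← Finset.sum_add_distrib]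
            exact Finset.sum_eq_zero fun i _ => by ring
          rw [h3, Real.exp_zero, mul_one]
  have hualpha : ∀ α ∈ Ap, u α ≤ v α := fun α hα => by
    simp only [hu]
    exact Finset.sup'_le _ _ fun β _ => hmle β α hα
  have hvbu : ∀ β ∈ An, v β ≤ u β := by
    intro β hβ
    have h1 : |v β| ≤ mB β β := by
      have h4 : |v β| / Real.exp (∑ i, -τ β i * β i) ≤ t β := by
        refine Finset.le_inf' _ _ fun α hα => ?_
        rw [div_le_iff₀ (Real.exp_pos _)]
        calc |v β| ≤ v α * Real.exp (∑ i, (α i - β i) * τ β i) := hτ β hβ α hα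
          _ = (v α * Real.exp (∑ i, τ β i * α i)) * Real.exp (∑ i, -τ β i * β i) := by
            have harg : (∑ i, (α i - β i) * τ β i)
                = (∑ i, τ β i * α i) + ∑ i, -τ β i * β i := by
              rw [← Finset.sum_add_distrib]
              exact Finset.sum_congr rfl fun i _ => by ring
            rw [mul_assoc, ← Real.exp_add, ← harg]
      have h5 := (div_le_iff₀ (Real.exp_pos (∑ i, -τ β i * β i))).mp h4
      calc |v β| ≤ t β * Real.exp (∑ i, -τ β i * β i) := h5
        _ = mB β β := rfl
    have h6 : mB β β ≤ u β := by
      simp only [hu]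
      exact Finset.le_sup' (fun b => mB b β) hβ
    exact le_trans (le_trans (le_abs_self _) h1) h6
  have hF4 : ∀ i : Fin m, 0 ≤ ∑ γ ∈ Ap ∪ An, u γ * d i γ := by
    intro i
    by_cases hneg : ∃ γ0 ∈ Ap ∪ An, d i γ0 < 0
    · obtain ⟨γ0, hγ0, hdneg⟩ := hneg
      obtain ⟨β0, hβ0, hequ⟩ := Finset.exists_mem_eq_sup' hAn (fun β => mB β γ0)
      have hstep : ∑ γ ∈ Ap ∪ An, mB β0 γ * d i γ ≤ ∑ γ ∈ Ap ∪ An, u γ * d i γ := by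
        refine Finset.sum_le_sum fun γ hγ => ?_
        simp only [hu]
        by_cases hγeq : γ = γ0
        · subst hγeq
          rw [hequ]
        · have hdγ : 0 ≤ d i γ := by
            by_contra hlt
            push_neg at hlt
            exact hγeq (huniq i γ hγ γ0 hγ0 hlt hdneg)
          exact mul_le_mul_of_nonneg_right (Finset.le_sup' (fun b => mB b γ) hβ0) hdγ
      have h5 := hnn i (fun i0 => -τ β0 i0)
      rw [expSum] at h5
      have hexp : ∑ γ ∈ Ap ∪ An, mB β0 γ * d i γ
          = t β0 * ∑ γ ∈ Ap ∪ An, d i γ * Real.exp (∑ i0, (fun i0 => -τ β0 i0) i0 * γ i0) := by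
        rw [Finset.mul_sum]
        refine Finset.sum_congr rfl fun γ _ => ?_
        simp only [hmB]
        ring
      have h6 : 0 ≤ ∑ γ ∈ Ap ∪ An, mB β0 γ * d i γ := by
        rw [hexp]
        exact mul_nonneg (ht_pos β0).le h5
      linarith
    · push_neg at hneg
      exact Finset.sum_nonneg fun γ hγ => mul_nonneg (hu_nonneg γ) (hneg γ hγ)
  have hsplit : ∑ γ ∈ Ap ∪ An, v γ * c γ
      = (∑ γ ∈ Ap ∪ An, (v γ - u γ) * c γ) + ∑ γ ∈ Ap ∪ An, u γ * c γ := by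
    rw [← Finset.sum_add_distrib]
    exact Finset.sum_congr rfl fun γ _ => by ring
  rw [hsplit]
  refine add_nonneg ?_ ?_
  · rw [Finset.sum_union hdisj]
    refine add_nonneg (Finset.sum_nonneg fun α hα => ?_) (Finset.sum_nonneg fun β hβ => ?_)
    · exact mul_nonneg (by linarith [hualpha α hα]) (hcp α hα)
    · have h7 : v β - u β ≤ 0 := by linarith [hvbu β hβ]
      have h8 := mul_nonneg (neg_nonneg.mpr h7) (neg_nonneg.mpr (hcn β hβ))
      rwa [neg_mul_neg] at h8
  · have h9 : ∑ γ ∈ Ap ∪ An, u γ * c γ = ∑ i : Fin m, ∑ γ ∈ Ap ∪ An, u γ * d i γ := by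
      rw [Finset.sum_comm]
      refine Finset.sum_congr rfl fun γ hγ => ?_
      rw [hsum γ hγ, Finset.mul_sum]
    rw [h9]
    exact Finset.sum_nonneg fun i _ => hF4 i

end SAGEAux

/-- Membership in `D_{(A⁺,A⁻)}` (for positive coefficients on `A⁺`) is
equivalent to feasibility of the linear system `ln(|v_β|/v_α) ≤ ⟨α−β, τ^{(β)}⟩`
(stated multiplicatively), and every such `v` lies in the dual cone of `C_{(A⁺,A⁻)}`. -/
theorem dual_membership_iff_LP_feasible {n : ℕ}
    (Ap An : Finset (Fin n → ℝ)) (hdisj : Disjoint Ap An) (hAp : Ap.Nonempty)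
    (v : (Fin n → ℝ) → ℝ) (hv : ∀ α ∈ Ap, 0 < v α) :
    (InDual Ap An v ↔
      ∃ τ : (Fin n → ℝ) → (Fin n → ℝ), ∀ β ∈ An, ∀ α ∈ Ap,
        |v β| ≤ v α * Real.exp (∑ i, (α i - β i) * τ β i)) ∧
    (InDual Ap An v → v ∈ dualCone (Ap ∪ An) {c | InSAGE Ap An c}) := by
  have dirB : InDual Ap An v →
      ∃ τ : (Fin n → ℝ) → (Fin n → ℝ), ∀ β ∈ An, ∀ α ∈ Ap,
        |v β| ≤ v α * Real.exp (∑ i, (α i - β i) * τ β i) := by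
    intro hD
    have hstep : ∀ β ∈ An, ∃ tb : Fin n → ℝ, ∀ α ∈ Ap,
        |v β| ≤ v α * Real.exp (∑ i, (α i - β i) * tb i) := by
      intro β hβ
      by_cases hvb : v β = 0
      · refine ⟨0, fun α hα => ?_⟩
        rw [hvb, abs_zero]
        exact mul_nonneg (hv α hα).le (Real.exp_pos _).le
      · exact exists_tau Ap hAp v hv β |v β| (abs_pos.mpr hvb)
          (fun lam hlam => hD.2 β hβ lam hlam)
    choose! τ hτ using hstep
    exact ⟨τ, hτ⟩
  have dirA : (∃ τ : (Fin n → ℝ) → (Fin n → ℝ), ∀ β ∈ An, ∀ α ∈ Ap,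
      |v β| ≤ v α * Real.exp (∑ i, (α i - β i) * τ β i)) → InDual Ap An v := by
    rintro ⟨τ, hτ⟩
    exact tau_to_InDual Ap An v hv τ hτ
  refine ⟨⟨dirB, dirA⟩, fun hD => ?_⟩
  obtain ⟨τ, hτ⟩ := dirB hD
  exact tau_to_dualCone Ap An hdisj hAp v hv τ hτ
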